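/- If H is a Sidorenko graph then every edge of H is smooth in H: for every edge e = (x₁,x₂) of H and every finite graph G with edge density d > 0, choosing a uniformly random edge f of G, we have E(ln t_f(H*, G)) ≥ (|E(H)| − 1) ln d, where H* is H with e removed and its endpoints labeled, and t_f(H*, G) is the homomorphism density of H* with the two labeled vertices mapped to the endpoints of f. -/

import Mathlib

open Finset

noncomputable section
open scoped Classical

/-- The real-valued adjacency indicator of a graph. -/
def adjInd {U : Type} (G : SimpleGraph U) (u v : U) : ℝ := if G.Adj u v then 1 else 0

/-- The product of adjacency indicators of `G` over the edges of a template graph `Hs`,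
evaluated at a vertex-assignment `x`. -/
def adjProd {U : Type} (G : SimpleGraph U) {k : ℕ} (Hs : SimpleGraph (Fin k))
    (x : Fin k → U) : ℝ :=
  ∏ e ∈ Hs.edgeFinset,
    Sym2.lift ⟨fun a b => adjInd G (x a) (x b),
      fun a b => by simp [adjInd, SimpleGraph.adj_comm]⟩ e

/-- The edge density of a finite graph `G`. -/
def graphDensity {U : Type} [Fintype U] (G : SimpleGraph U) : ℝ :=
  ((Fintype.card U : ℝ) ^ 2)⁻¹ * ∑ u : U, ∑ v : U, adjInd G u v

/-- The normalized degree of a vertex in a finite graph. -/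
def graphDeg {U : Type} [Fintype U] (G : SimpleGraph U) (u : U) : ℝ :=
  (Fintype.card U : ℝ)⁻¹ * ∑ v : U, adjInd G u v

/-- The homomorphism density `t(Hs, G)`. -/
def homDensity {U : Type} [Fintype U] (G : SimpleGraph U) {m : ℕ}
    (Hs : SimpleGraph (Fin m)) : ℝ :=
  ((Fintype.card U : ℝ) ^ m)⁻¹ * ∑ x : Fin m → U, adjProd G Hs x

/-- Extend an assignment `y` of the first `n` (labeled) vertices by `x` on the rest. -/
def extAssign {U : Type} {m n : ℕ} (y : Fin n → U) (x : Fin m → U) : Fin m → U :=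
  fun i => if h : (i : ℕ) < n then y ⟨i, h⟩ else x i

/-- The restricted homomorphism density `t_S(Hs, G)(y)`, with the first `n` (labeled)
vertices fixed to `y`. -/
def restrictedHomDensity {U : Type} [Fintype U] (G : SimpleGraph U) {m : ℕ} (n : ℕ)
    (Hs : SimpleGraph (Fin m)) (y : Fin n → U) : ℝ :=
  ((Fintype.card U : ℝ) ^ m)⁻¹ * ∑ x : Fin m → U, adjProd G Hs (extAssign y x)

/-- The canonical tree weight `f_T` (graph version):
`f_T(y) = d⁻¹ ∏ᵢ d(yᵢ)^{1-rᵢ} ∏_{(xᵢ,xⱼ)∈E(T)} A(yᵢ,yⱼ)`. -/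
def treeWeightG {U : Type} [Fintype U] (G : SimpleGraph U) {n : ℕ}
    (T : SimpleGraph (Fin n)) (y : Fin n → U) : ℝ :=
  (graphDensity G)⁻¹ *
    (∏ i : Fin n, graphDeg G (y i) ^ ((1 : ℤ) - (T.degree i : ℤ))) * adjProd G T y

/-- `H*`: the graph `H` with the edges of the tree `T` (spanned on the first `n` vertices)
deleted. -/
def deleteTreeEdges {m n : ℕ} (hnm : n ≤ m) (H : SimpleGraph (Fin m))
    (T : SimpleGraph (Fin n)) : SimpleGraph (Fin m) :=
  H.deleteEdges (Sym2.map (Fin.castLE hnm) '' T.edgeSet)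

/-- Graph-theoretic smoothness: the tree `T`, spanned on the first `n` (labeled) vertices
of `H`, is smooth in `H` if for every finite graph `G` of positive edge density `d`,
`E_{μ_T}(ln t_S(H*, G)) ≥ |E(H*)| ln d`, where `μ_T` is the distribution on copies of `T`
in `G` with density `f_T` (with respect to the uniform measure). -/
def IsSmoothG {m n : ℕ} (hnm : n ≤ m) (H : SimpleGraph (Fin m))
    (T : SimpleGraph (Fin n)) : Prop :=
  ∀ (U : Type) [Fintype U] [DecidableEq U] (G : SimpleGraph U),
    0 < graphDensity G →
    (((Fintype.card U : ℝ) ^ n)⁻¹ * ∑ y : Fin n → U, treeWeightG G T y *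
        Real.log (restrictedHomDensity G n (deleteTreeEdges hnm H T) y))
      ≥ ((deleteTreeEdges hnm H T).edgeFinset.card : ℝ) * Real.log (graphDensity G)

/-- The restricted homomorphism density `t_f(Hs, G)` of a two-rooted template `Hs`, with
the labeled vertices `v₁, v₂` mapped to the endpoints `u, v` of the edge `f` of `G`. -/
def edgeRootedDensity {U : Type} [Fintype U] (G : SimpleGraph U) {m : ℕ}
    (Hs : SimpleGraph (Fin m)) (v₁ v₂ : Fin m) (u v : U) : ℝ :=
  ((Fintype.card U : ℝ) ^ m)⁻¹ *
    ∑ x : Fin m → U, adjProd G Hs (Function.update (Function.update x v₁ u) v₂ v)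

section AuxLemmas

variable {U : Type}

lemma adjInd_nonneg (G : SimpleGraph U) (u v : U) : 0 ≤ adjInd G u v := by
  unfold adjInd; split <;> norm_num

lemma adjInd_le_one (G : SimpleGraph U) (u v : U) : adjInd G u v ≤ 1 := by
  unfold adjInd; split <;> norm_num

lemma adjProd_nonneg (G : SimpleGraph U) {k : ℕ} (Hs : SimpleGraph (Fin k))
    (x : Fin k → U) : 0 ≤ adjProd G Hs x := by
  unfold adjProd
  refine Finset.prod_nonneg fun e _ => ?_
  induction e using Sym2.ind with
  | _ a b => rw [Sym2.lift_mk]; exact adjInd_nonneg G _ _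

lemma adjProd_mono {G G' : SimpleGraph U} (h : ∀ u v, G'.Adj u v → G.Adj u v)
    {k : ℕ} (Hs : SimpleGraph (Fin k)) (x : Fin k → U) :
    adjProd G' Hs x ≤ adjProd G Hs x := by
  unfold adjProd
  refine Finset.prod_le_prod (fun e _ => ?_) (fun e _ => ?_)
  · induction e using Sym2.ind with
    | _ a b => rw [Sym2.lift_mk]; exact adjInd_nonneg G' _ _
  · induction e using Sym2.ind with
    | _ a b =>
      rw [Sym2.lift_mk, Sym2.lift_mk]
      show adjInd G' (x a) (x b) ≤ adjInd G (x a) (x b)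
      unfold adjInd
      by_cases hadj : G'.Adj (x a) (x b)
      · rw [if_pos hadj, if_pos (h _ _ hadj)]
      · rw [if_neg hadj]; split <;> norm_num

/-- decomposition: pulling out one edge of `H`. -/
lemma adjProd_decomp [Fintype U] (G : SimpleGraph U) {m : ℕ} (H : SimpleGraph (Fin m))
    (v₁ v₂ : Fin m) (hAdj : H.Adj v₁ v₂) (z : Fin m → U) :
    adjProd G H z = adjInd G (z v₁) (z v₂) * adjProd G (H.deleteEdges {s(v₁, v₂)}) z := by
  classical
  unfold adjProd
  have hefs : (H.deleteEdges {s(v₁, v₂)}).edgeFinset = H.edgeFinset.erase s(v₁, v₂) := by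
    ext e
    simp only [SimpleGraph.mem_edgeFinset, SimpleGraph.edgeSet_deleteEdges,
      Set.mem_diff, Finset.mem_erase, Set.mem_singleton_iff]
    tauto
  have hmem : s(v₁, v₂) ∈ H.edgeFinset := by
    rw [SimpleGraph.mem_edgeFinset, SimpleGraph.mem_edgeSet]; exact hAdj
  rw [← Finset.mul_prod_erase H.edgeFinset _ hmem, Sym2.lift_mk]
  congr 1
  exact Finset.prod_congr (by convert hefs.symm) (fun _ _ => rfl)

end AuxLemmas
section AuxLemmas2

variable {U : Type}

/-- homomorphism density splits as average over the images of one fixed edge. -/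
lemma key_identity [Fintype U] (G : SimpleGraph U) {m : ℕ} (H : SimpleGraph (Fin m))
    (v₁ v₂ : Fin m) (hAdj : H.Adj v₁ v₂) :
    homDensity G H = ((Fintype.card U : ℝ) ^ 2)⁻¹ *
      ∑ p : U × U, adjInd G p.1 p.2 *
        edgeRootedDensity G (H.deleteEdges {s(v₁, v₂)}) v₁ v₂ p.1 p.2 := by
  classical
  have h12 : v₁ ≠ v₂ := hAdj.ne
  have hm : m ≠ 0 := fun h => (h ▸ v₁).elim0
  set Hs := H.deleteEdges {s(v₁, v₂)} with hHs
  set N : ℝ := (Fintype.card U : ℝ) with hN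
  set g : (Fin m → U) → ℝ := fun z => adjInd G (z v₁) (z v₂) * adjProd G Hs z with hg
  set Φ : (U × U) × (Fin m → U) → (U × U) × (Fin m → U) :=
    fun q => ((q.2 v₁, q.2 v₂),
      Function.update (Function.update q.2 v₁ q.1.1) v₂ q.1.2) with hΦ
  have upd_v₁ : ∀ (x : Fin m → U) (u v : U),
      Function.update (Function.update x v₁ u) v₂ v v₁ = u := by
    intro x u v
    rw [Function.update_of_ne h12, Function.update_self]
  have upd_v₂ : ∀ (x : Fin m → U) (u v : U),
      Function.update (Function.update x v₁ u) v₂ v v₂ = v := by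
    intro x u v; rw [Function.update_self]
  have upd_restore : ∀ (x : Fin m → U) (u v : U),
      Function.update (Function.update
        (Function.update (Function.update x v₁ u) v₂ v) v₁ (x v₁)) v₂ (x v₂) = x := by
    intro x u v
    funext j
    by_cases hj2 : j = v₂
    · subst hj2; rw [Function.update_self]
    by_cases hj1 : j = v₁
    · subst hj1
      rw [Function.update_of_ne h12, Function.update_self]
    · rw [Function.update_of_ne hj2, Function.update_of_ne hj1,
        Function.update_of_ne hj2, Function.update_of_ne hj1]
  have hinv : Function.Involutive Φ := by
    rintro ⟨⟨u, v⟩, x⟩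
    simp only [hΦ]
    refine Prod.ext (Prod.ext ?_ ?_) ?_
    · exact upd_v₁ x u v
    · exact upd_v₂ x u v
    · exact upd_restore x u v
  have hsum : ∑ q : (U × U) × (Fin m → U),
      g (Function.update (Function.update q.2 v₁ q.1.1) v₂ q.1.2)
      = ∑ q : (U × U) × (Fin m → U), g q.2 := by
    have := Equiv.sum_comp (Function.Involutive.toPerm Φ hinv)
      (fun q : (U × U) × (Fin m → U) =>
        g (Function.update (Function.update q.2 v₁ q.1.1) v₂ q.1.2))
    rw [← this]
    refine Finset.sum_congr rfl fun q _ => ?_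
    rcases q with ⟨⟨u, v⟩, x⟩
    have heq : (Function.Involutive.toPerm Φ hinv) ((u, v), x) = Φ ((u, v), x) := rfl
    rw [heq]
    simp only [hΦ]
    rw [upd_restore]
  have hdecomp : ∑ z : Fin m → U, adjProd G H z = ∑ z : Fin m → U, g z :=
    Finset.sum_congr rfl fun z _ => adjProd_decomp G H v₁ v₂ hAdj z
  unfold homDensity edgeRootedDensity
  have exp1 : ∀ p : U × U, adjInd G p.1 p.2 *
      ((N ^ m)⁻¹ * ∑ x : Fin m → U,
        adjProd G Hs (Function.update (Function.update x v₁ p.1) v₂ p.2))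
      = (N ^ m)⁻¹ * ∑ x : Fin m → U,
          g (Function.update (Function.update x v₁ p.1) v₂ p.2) := by
    intro p
    simp only [Finset.mul_sum]
    refine Finset.sum_congr rfl fun x _ => ?_
    simp only [hg]
    rw [upd_v₁ x p.1 p.2, upd_v₂ x p.1 p.2]
    ring
  have h1 : ∑ p : U × U, ∑ x : Fin m → U,
      g (Function.update (Function.update x v₁ p.1) v₂ p.2)
      = ∑ q : (U × U) × (Fin m → U),
        g (Function.update (Function.update q.2 v₁ q.1.1) v₂ q.1.2) :=
    (Fintype.sum_prod_type (fun q : (U × U) × (Fin m → U) =>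
      g (Function.update (Function.update q.2 v₁ q.1.1) v₂ q.1.2))).symm
  have h2 : ∑ q : (U × U) × (Fin m → U), g q.2 = (N ^ 2) * ∑ z : Fin m → U, g z := by
    rw [Fintype.sum_prod_type]
    simp only [Finset.sum_const, Finset.card_univ, Fintype.card_prod, nsmul_eq_mul, hN]
    push_cast
    ring
  calc (N ^ m)⁻¹ * ∑ z : Fin m → U, adjProd G H z
      = (N ^ 2)⁻¹ * ((N ^ 2) * ((N ^ m)⁻¹ * ∑ z : Fin m → U, g z)) := by
        rcases eq_or_ne N 0 with h0 | h0
        · rw [h0, zero_pow hm, zero_pow (by norm_num : (2:ℕ) ≠ 0)]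
          simp
        · rw [hdecomp, inv_mul_cancel_left₀ (pow_ne_zero 2 h0)]
    _ = (N ^ 2)⁻¹ * ∑ p : U × U, adjInd G p.1 p.2 *
        ((N ^ m)⁻¹ * ∑ x : Fin m → U,
          adjProd G Hs (Function.update (Function.update x v₁ p.1) v₂ p.2)) := by
        congr 1
        rw [Finset.sum_congr rfl fun p _ => exp1 p, ← Finset.mul_sum, h1, hsum, h2]
        ring

end AuxLemmas2
section Tensor

variable {U : Type}

/-- the `(k+1)`-fold tensor power of a graph. -/
def tensorG (G : SimpleGraph U) (k : ℕ) : SimpleGraph (Fin (k + 1) → U) where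
  Adj x y := ∀ i, G.Adj (x i) (y i)
  symm := ⟨fun x y h i => (h i).symm⟩
  loopless := ⟨fun x h => G.loopless.irrefl _ (h 0)⟩

lemma adjInd_tensor (G : SimpleGraph U) (k : ℕ) (x y : Fin (k + 1) → U) :
    adjInd (tensorG G k) x y = ∏ i : Fin (k + 1), adjInd G (x i) (y i) := by
  unfold adjInd
  rw [Finset.prod_boole]
  by_cases h : ∀ i, G.Adj (x i) (y i)
  · rw [if_pos (fun i _ => h i), if_pos (show (tensorG G k).Adj x y from h)]
  · rw [if_neg (show ¬ (tensorG G k).Adj x y from h),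
      if_neg (show ¬ ∀ i ∈ Finset.univ, G.Adj (x i) (y i) from
        fun hh => h fun i => hh i (Finset.mem_univ i))]

lemma adjProd_tensor (G : SimpleGraph U) (k : ℕ) {m : ℕ} (Hs : SimpleGraph (Fin m))
    (z : Fin m → (Fin (k + 1) → U)) :
    adjProd (tensorG G k) Hs z = ∏ i : Fin (k + 1), adjProd G Hs (fun j => z j i) := by
  unfold adjProd
  conv_rhs => rw [Finset.prod_comm]
  refine Finset.prod_congr rfl fun e _ => ?_
  induction e using Sym2.ind with
  | _ a b =>
    simp only [Sym2.lift_mk]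
    exact adjInd_tensor G k (z a) (z b)

/-- sums over pairs of vertex-tuples are sums over tuples of pairs. -/
lemma sum_pair_fun [Fintype U] {K : ℕ} (F : (Fin K → U × U) → ℝ) :
    ∑ x : Fin K → U, ∑ y : Fin K → U, F (fun i => (x i, y i)) = ∑ g : Fin K → U × U, F g := by
  classical
  rw [← Fintype.sum_prod_type (fun z : (Fin K → U) × (Fin K → U) => F (fun i => (z.1 i, z.2 i)))]
  rw [← Equiv.sum_comp (Equiv.arrowProdEquivProdArrow (Fin K) (fun _ => U) (fun _ => U))
    (fun z : (Fin K → U) × (Fin K → U) => F (fun i => (z.1 i, z.2 i)))]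
  refine Finset.sum_congr rfl fun g _ => ?_
  congr 1

end Tensor
section ERD

variable {U : Type}

lemma erd_nonneg [Fintype U] (G : SimpleGraph U) {m : ℕ} (Hs : SimpleGraph (Fin m))
    (v₁ v₂ : Fin m) (u v : U) : 0 ≤ edgeRootedDensity G Hs v₁ v₂ u v := by
  unfold edgeRootedDensity
  exact mul_nonneg (by positivity) (Finset.sum_nonneg fun x _ => adjProd_nonneg G Hs _)

lemma erd_mono [Fintype U] {G G' : SimpleGraph U} (h : ∀ a b, G'.Adj a b → G.Adj a b)
    {m : ℕ} (Hs : SimpleGraph (Fin m)) (v₁ v₂ : Fin m) (u v : U) :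
    edgeRootedDensity G' Hs v₁ v₂ u v ≤ edgeRootedDensity G Hs v₁ v₂ u v := by
  unfold edgeRootedDensity
  exact mul_le_mul_of_nonneg_left
    (Finset.sum_le_sum fun x _ => adjProd_mono h Hs _) (by positivity)

lemma erd_tensor [Fintype U] (G : SimpleGraph U) (k : ℕ) {m : ℕ} (Hs : SimpleGraph (Fin m))
    (v₁ v₂ : Fin m) (x y : Fin (k + 1) → U) :
    edgeRootedDensity (tensorG G k) Hs v₁ v₂ x y
      = ∏ i : Fin (k + 1), edgeRootedDensity G Hs v₁ v₂ (x i) (y i) := by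
  classical
  unfold edgeRootedDensity
  have hupd : ∀ (w : Fin m → (Fin (k+1) → U)) (i : Fin (k+1)),
      (fun j => (Function.update (Function.update w v₁ x) v₂ y) j i)
        = Function.update (Function.update (fun j => w j i) v₁ (x i)) v₂ (y i) := by
    intro w i
    funext j
    by_cases h2 : j = v₂
    · subst h2; simp
    · by_cases h1 : j = v₁
      · subst h1
        simp [Function.update_of_ne h2]
      · simp [Function.update_of_ne h1, Function.update_of_ne h2]
  have step1 : ∑ w : Fin m → (Fin (k+1) → U),
      adjProd (tensorG G k) Hs (Function.update (Function.update w v₁ x) v₂ y)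
      = ∑ w : Fin m → (Fin (k+1) → U), ∏ i : Fin (k+1),
          adjProd G Hs (Function.update (Function.update (fun j => w j i) v₁ (x i)) v₂ (y i)) := by
    refine Finset.sum_congr rfl fun w _ => ?_
    rw [adjProd_tensor]
    exact Finset.prod_congr rfl fun i _ => by rw [← hupd w i]
  have step2 : ∑ w : Fin m → (Fin (k+1) → U), ∏ i : Fin (k+1),
      adjProd G Hs (Function.update (Function.update (fun j => w j i) v₁ (x i)) v₂ (y i))
      = ∏ i : Fin (k+1), ∑ ω : Fin m → U,
          adjProd G Hs (Function.update (Function.update ω v₁ (x i)) v₂ (y i)) := by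
    rw [Fintype.prod_sum (κ := fun _ : Fin (k+1) => Fin m → U)
      (fun i ω => adjProd G Hs (Function.update (Function.update ω v₁ (x i)) v₂ (y i)))]
    rw [← Equiv.sum_comp (Equiv.piComm (fun (_ : Fin (k+1)) (_ : Fin m) => U))
      (fun w : Fin m → (Fin (k+1) → U) => ∏ i : Fin (k+1),
        adjProd G Hs (Function.update (Function.update (fun j => w j i) v₁ (x i)) v₂ (y i)))]
    rfl
  rw [step1, step2]
  have hcard : (Fintype.card (Fin (k+1) → U) : ℝ) ^ m
      = ((Fintype.card U : ℝ) ^ m) ^ (k + 1) := by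
    rw [Fintype.card_fun, Fintype.card_fin]
    push_cast
    rw [← pow_mul, ← pow_mul, Nat.mul_comm]
  rw [hcard, ← inv_pow]
  rw [Finset.prod_mul_distrib, Finset.prod_const, Finset.card_univ, Fintype.card_fin]

lemma fin2_eq_of_ne : ∀ x y z : Fin 2, x ≠ y → z ≠ y → x = z := by decide

lemma erd_pos [Fintype U] (G : SimpleGraph U) {m : ℕ} (H : SimpleGraph (Fin m))
    (hbip : H.Colorable 2) (v₁ v₂ : Fin m) (he : H.Adj v₁ v₂) (u v : U)
    (huv : G.Adj u v) :
    0 < edgeRootedDensity G (H.deleteEdges {s(v₁, v₂)}) v₁ v₂ u v := by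
  classical
  obtain ⟨C⟩ := hbip
  set z : Fin m → U := fun i => if C i = C v₁ then u else v with hz
  have hcard : (0:ℝ) < (Fintype.card U : ℝ) := by
    have : Nonempty U := ⟨u⟩
    exact_mod_cast Fintype.card_pos
  have hz1 : z v₁ = u := if_pos rfl
  have hz2 : z v₂ = v := if_neg (fun h => (C.valid he) h.symm)
  have hupdz : Function.update (Function.update z v₁ u) v₂ v = z := by
    rw [← hz1, Function.update_eq_self, ← hz2, Function.update_eq_self]
  have hprod : adjProd G (H.deleteEdges {s(v₁, v₂)}) z = 1 := by
    unfold adjProd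
    refine Finset.prod_eq_one fun e hee => ?_
    induction e using Sym2.ind with
    | _ a b =>
      rw [Sym2.lift_mk]
      show adjInd G (z a) (z b) = 1
      have hab : H.Adj a b := by
        simp only [SimpleGraph.mem_edgeFinset, SimpleGraph.mem_edgeSet] at hee
        exact hee.1
      have hcab : C a ≠ C b := C.valid hab
      unfold adjInd
      by_cases hca : C a = C v₁
      · have hcb : ¬ C b = C v₁ := fun h => hcab (hca.trans h.symm)
        rw [if_pos (show G.Adj (z a) (z b) by
          simp only [hz]
          rw [if_pos hca, if_neg hcb]
          exact huv)]
      · have hcb : C b = C v₁ := fin2_eq_of_ne (C b) (C a) (C v₁)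
          (fun h => hcab h.symm) (fun h => hca h.symm)
        rw [if_pos (show G.Adj (z a) (z b) by
          simp only [hz]
          rw [if_neg hca, if_pos hcb]
          exact huv.symm)]
  unfold edgeRootedDensity
  refine mul_pos (inv_pos.mpr (by positivity)) ?_
  refine lt_of_lt_of_le zero_lt_one ?_
  calc (1:ℝ) = adjProd G (H.deleteEdges {s(v₁, v₂)})
        (Function.update (Function.update z v₁ u) v₂ v) := by rw [hupdz, hprod]
    _ ≤ _ := Finset.single_le_sum
      (f := fun w : Fin m → U => adjProd G (H.deleteEdges {s(v₁, v₂)})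
        (Function.update (Function.update w v₁ u) v₂ v))
      (fun w _ => adjProd_nonneg G _ _) (Finset.mem_univ z)

end ERD
section Chebyshev

variable {α : Type} [Fintype α]

lemma chebyshev_term (a Y : α → ℝ) (hY0 : ∑ p : α, a p * Y p = 0) {K : ℕ} (i j : Fin K) :
    ∑ g : Fin K → α, (∏ l : Fin K, a (g l)) * (Y (g i) * Y (g j))
      = if i = j then (∑ p : α, a p * Y p ^ 2) * (∑ p : α, a p) ^ (K - 1) else 0 := by
  classical
  set c : Fin K → α → ℝ :=
    fun l p => a p * (if l = i then Y p else 1) * (if l = j then Y p else 1) with hc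
  have claim1 : ∀ g : Fin K → α,
      (∏ l : Fin K, c l (g l)) = (∏ l : Fin K, a (g l)) * (Y (g i) * Y (g j)) := by
    intro g
    simp only [hc]
    rw [Finset.prod_mul_distrib, Finset.prod_mul_distrib,
      Finset.prod_ite_eq' Finset.univ i (fun l => Y (g l)),
      Finset.prod_ite_eq' Finset.univ j (fun l => Y (g l)),
      if_pos (Finset.mem_univ i), if_pos (Finset.mem_univ j)]
    ring
  rw [Finset.sum_congr rfl fun g _ => (claim1 g).symm,
    ← Fintype.prod_sum (κ := fun _ : Fin K => α) c]
  by_cases hij : i = j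
  · subst hij
    rw [if_pos rfl]
    have hci : ∑ p : α, c i p = ∑ p : α, a p * Y p ^ 2 := by
      refine Finset.sum_congr rfl fun p _ => ?_
      simp only [hc, eq_self_iff_true, if_true]
      ring
    have hcl : ∀ l : Fin K, l ≠ i → ∑ p : α, c l p = ∑ p : α, a p := by
      intro l hl
      refine Finset.sum_congr rfl fun p _ => ?_
      simp only [hc, if_neg hl]
      ring
    rw [← Finset.mul_prod_erase Finset.univ (fun l => ∑ p : α, c l p) (Finset.mem_univ i)]
    rw [hci]
    congr 1
    rw [Finset.prod_congr rfl (fun l hl => hcl l (Finset.ne_of_mem_erase hl)),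
      Finset.prod_const, Finset.card_erase_of_mem (Finset.mem_univ i), Finset.card_univ,
      Fintype.card_fin]
  · rw [if_neg hij]
    refine Finset.prod_eq_zero (Finset.mem_univ i) ?_
    have : ∀ p, c i p = a p * Y p := by
      intro p
      simp only [hc, eq_self_iff_true, if_true, if_neg hij]
      ring
    rw [Finset.sum_congr rfl fun p _ => this p]
    exact hY0

lemma chebyshev_sum (a Y : α → ℝ) (hY0 : ∑ p : α, a p * Y p = 0) (K : ℕ) :
    ∑ g : Fin K → α, (∏ l : Fin K, a (g l)) * (∑ i : Fin K, Y (g i)) ^ 2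
      = (K : ℝ) * ((∑ p : α, a p * Y p ^ 2) * (∑ p : α, a p) ^ (K - 1)) := by
  classical
  have hsq : ∀ g : Fin K → α, (∏ l : Fin K, a (g l)) * (∑ i : Fin K, Y (g i)) ^ 2
      = ∑ i : Fin K, ∑ j : Fin K, (∏ l : Fin K, a (g l)) * (Y (g i) * Y (g j)) := by
    intro g
    rw [sq, Finset.sum_mul_sum]
    rw [Finset.mul_sum]
    exact Finset.sum_congr rfl fun i _ => by rw [Finset.mul_sum]
  rw [Finset.sum_congr rfl fun g _ => hsq g]
  rw [Finset.sum_comm]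
  have : ∀ i : Fin K, ∑ g : Fin K → α, ∑ j : Fin K,
      (∏ l : Fin K, a (g l)) * (Y (g i) * Y (g j))
      = (∑ p : α, a p * Y p ^ 2) * (∑ p : α, a p) ^ (K - 1) := by
    intro i
    rw [Finset.sum_comm]
    have h2 : ∀ j : Fin K, ∑ g : Fin K → α, (∏ l : Fin K, a (g l)) * (Y (g i) * Y (g j))
        = if i = j then (∑ p : α, a p * Y p ^ 2) * (∑ p : α, a p) ^ (K - 1) else 0 :=
      fun j => chebyshev_term a Y hY0 i j
    rw [Finset.sum_congr rfl fun j _ => h2 j, Finset.sum_ite_eq Finset.univ i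
      (fun _ => (∑ p : α, a p * Y p ^ 2) * (∑ p : α, a p) ^ (K - 1)),
      if_pos (Finset.mem_univ i)]
  rw [Finset.sum_congr rfl fun i _ => this i, Finset.sum_const, Finset.card_univ,
    Fintype.card_fin, nsmul_eq_mul]

end Chebyshev
section AuxLemmas

variable {U : Type}

set_option maxHeartbeats 3000000 in
/-- Smoothness of edges in Sidorenko graphs: if `H` is a Sidorenko graph, then every edge
`e = (v₁, v₂)` of `H` is smooth in `H`: for every finite graph `G` of edge density
`d > 0`, choosing a uniformly random edge `f` of `G`,
`E(ln t_f(H*, G)) ≥ (|E(H)| − 1) ln d`, where `H* = H − e` with endpoints labeled. -/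
theorem sidorenko_implies_edge_smooth (m : ℕ) (H : SimpleGraph (Fin m))
    (hbip : H.Colorable 2)
    (hSid : ∀ (U : Type) [Fintype U] [DecidableEq U] (G : SimpleGraph U),
      homDensity G H ≥ graphDensity G ^ H.edgeFinset.card)
    (v₁ v₂ : Fin m) (he : H.Adj v₁ v₂) :
    ∀ (U : Type) [Fintype U] [DecidableEq U] (G : SimpleGraph U),
      0 < graphDensity G →
      ((Finset.univ.filter fun p : U × U => G.Adj p.1 p.2).card : ℝ)⁻¹ *
          ∑ p ∈ Finset.univ.filter (fun p : U × U => G.Adj p.1 p.2),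
            Real.log (edgeRootedDensity G (H.deleteEdges {s(v₁, v₂)}) v₁ v₂ p.1 p.2)
        ≥ ((H.edgeFinset.card : ℝ) - 1) * Real.log (graphDensity G) := by
  intro U instF instD G hd
  classical
  set n : ℕ := Fintype.card U with hn
  set d : ℝ := graphDensity G with hdd
  set Hs : SimpleGraph (Fin m) := H.deleteEdges {s(v₁, v₂)} with hHs
  set F : Finset (U × U) := Finset.univ.filter (fun p : U × U => G.Adj p.1 p.2) with hF
  set L : ℝ := ((F.card : ℝ))⁻¹ *
    ∑ p ∈ F, Real.log (edgeRootedDensity G Hs v₁ v₂ p.1 p.2) with hLdef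
  set E : ℕ := H.edgeFinset.card with hE
  -- basic quantities
  set a : U × U → ℝ := fun p => adjInd G p.1 p.2 with ha
  set t : U × U → ℝ := fun p => edgeRootedDensity G Hs v₁ v₂ p.1 p.2 with ht
  set X : U × U → ℝ := fun p => Real.log (t p) with hX
  set W : ℝ := ∑ p : U × U, a p with hW
  have hmemE : s(v₁, v₂) ∈ H.edgeFinset := by
    rw [SimpleGraph.mem_edgeFinset, SimpleGraph.mem_edgeSet]; exact he
  have hE1 : 1 ≤ E := by
    rw [hE]
    exact Finset.card_pos.mpr ⟨_, hmemE⟩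
  have hWd : d = ((n : ℝ) ^ 2)⁻¹ * W := by
    rw [hW, hdd]
    unfold graphDensity
    rw [Fintype.sum_prod_type]
  have hWne : W ≠ 0 := by
    intro h0
    rw [hWd, h0, mul_zero] at hd
    exact lt_irrefl 0 hd
  have hU : Nonempty U := by
    by_contra hemp
    have : IsEmpty U := not_nonempty_iff.mp hemp
    exact hWne (by rw [hW]; exact Finset.sum_of_isEmpty _)
  have hnpos : (0 : ℝ) < (n : ℝ) := by
    have : 0 < n := Fintype.card_pos
    exact_mod_cast this
  have hWeq : W = (n : ℝ) ^ 2 * d := by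
    rw [hWd, mul_inv_cancel_left₀ (ne_of_gt (pow_pos hnpos 2))]
  have hWpos : 0 < W := by
    rw [hWeq]; exact mul_pos (pow_pos hnpos 2) hd
  have hFW : (F.card : ℝ) = W := by
    rw [hW, hF]
    have : ∀ p : U × U, a p = if G.Adj p.1 p.2 then (1:ℝ) else 0 := fun p => rfl
    rw [Finset.sum_congr rfl fun p _ => this p, Finset.sum_boole]
  have htpos : ∀ p : U × U, G.Adj p.1 p.2 → 0 < t p := by
    intro p hp
    exact erd_pos G H hbip v₁ v₂ he p.1 p.2 hp
  have ht1 : ∀ p : U × U, G.Adj p.1 p.2 → t p = Real.exp (X p) := by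
    intro p hp
    rw [hX, Real.exp_log (htpos p hp)]
  -- mean identity
  have haX : ∀ p : U × U, a p * X p = if G.Adj p.1 p.2 then X p else 0 := by
    intro p
    rw [ha]
    show adjInd G p.1 p.2 * X p = _
    unfold adjInd
    split <;> ring
  have hL : ∑ p : U × U, a p * X p = W * L := by
    rw [Finset.sum_congr rfl fun p _ => haX p, ← Finset.sum_filter, ← hF, hLdef, ← hFW]
    have hFcne : (F.card : ℝ) ≠ 0 := by rw [hFW]; exact hWne
    field_simp
  set Y : U × U → ℝ := fun p => X p - L with hY
  have hY0 : ∑ p : U × U, a p * Y p = 0 := by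
    have : ∀ p : U × U, a p * Y p = a p * X p - a p * L := fun p => by rw [hY]; ring
    rw [Finset.sum_congr rfl fun p _ => this p, Finset.sum_sub_distrib, hL,
      ← Finset.sum_mul, ← hW]
    ring
  set V : ℝ := ∑ p : U × U, a p * Y p ^ 2 with hV
  have haNN : ∀ p : U × U, 0 ≤ a p := fun p => adjInd_nonneg G p.1 p.2
  have hVnn : 0 ≤ V := Finset.sum_nonneg fun p _ => mul_nonneg (haNN p) (sq_nonneg _)
  -- reduce to epsilon-approximation
  rw [ge_iff_le]
  refine le_of_forall_pos_le_add fun ε hε => ?_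
  set ε' : ℝ := ε / 2 with hε'
  have hε'pos : 0 < ε' := by rw [hε']; linarith
  -- choose K
  obtain ⟨k0, hk0⟩ := exists_nat_gt
    (max (4 * V / (W * ε' ^ 2)) (((E : ℝ) - 1) * Real.log 2 / ε'))
  set K : ℕ := k0 + 1 with hKdef
  have hKC : (k0 : ℝ) < (K : ℝ) := by rw [hKdef]; push_cast; linarith
  have hKa : 4 * V / (W * ε' ^ 2) < (K : ℝ) :=
    lt_trans (lt_of_le_of_lt (le_max_left _ _) hk0) hKC
  have hKb : ((E : ℝ) - 1) * Real.log 2 / ε' < (K : ℝ) :=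
    lt_trans (lt_of_le_of_lt (le_max_right _ _) hk0) hKC
  have hKpos : (0 : ℝ) < (K : ℝ) := by rw [hKdef]; push_cast; positivity
  set β : ℝ := (K : ℝ) * (L + ε') with hβ
  -- tuple-space quantities
  set A : (Fin K → U × U) → ℝ := fun g => ∏ i, a (g i) with hA
  set S : (Fin K → U × U) → ℝ := fun g => ∑ i, X (g i) with hS
  set bad : (Fin K → U × U) → ℝ := fun g => if β < S g then 1 else 0 with hbad
  set B : ℝ := ∑ g : Fin K → U × U, A g * bad g with hB
  have hAnn : ∀ g, 0 ≤ A g := fun g => Finset.prod_nonneg fun i _ => haNN (g i)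
  have hbadnn : ∀ g, 0 ≤ bad g := by
    intro g; rw [hbad]; dsimp only; split <;> norm_num
  have hsumA : ∑ g : Fin K → U × U, A g = W ^ K := by
    rw [hW, Fintype.sum_pow a K]
  -- Chebyshev bound
  have hYS : ∀ g : Fin K → U × U, ∑ i, Y (g i) = S g - (K : ℝ) * L := by
    intro g
    rw [hS]
    simp only [hY]
    rw [Finset.sum_sub_distrib, Finset.sum_const, Finset.card_univ, Fintype.card_fin,
      nsmul_eq_mul]
  have hcheb : ((K : ℝ) * ε') ^ 2 * B ≤ (K : ℝ) * (V * W ^ (K - 1)) := by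
    have hpt : ∀ g : Fin K → U × U,
        ((K : ℝ) * ε') ^ 2 * (A g * bad g) ≤ A g * (S g - (K : ℝ) * L) ^ 2 := by
      intro g
      by_cases hb : β < S g
      · rw [hbad]
        dsimp only
        rw [if_pos hb, mul_one]
        have h1 : (K : ℝ) * ε' ≤ S g - (K : ℝ) * L := by
          rw [hβ] at hb; linarith
        have h2 : (0 : ℝ) ≤ (K : ℝ) * ε' := by positivity
        have h3 : ((K : ℝ) * ε') ^ 2 ≤ (S g - (K : ℝ) * L) ^ 2 := by
          rw [sq, sq]
          exact mul_le_mul h1 h1 h2 (h2.trans h1)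
        have h4 := mul_le_mul_of_nonneg_left h3 (hAnn g)
        linarith
      · rw [hbad]
        dsimp only
        rw [if_neg hb, mul_zero, mul_zero]
        exact mul_nonneg (hAnn g) (sq_nonneg _)
    calc ((K : ℝ) * ε') ^ 2 * B
        = ∑ g : Fin K → U × U, ((K : ℝ) * ε') ^ 2 * (A g * bad g) := by
          rw [hB, Finset.mul_sum]
      _ ≤ ∑ g : Fin K → U × U, A g * (S g - (K : ℝ) * L) ^ 2 :=
          Finset.sum_le_sum fun g _ => hpt g
      _ = ∑ g : Fin K → U × U, (∏ l, a (g l)) * (∑ i, Y (g i)) ^ 2 := by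
          refine Finset.sum_congr rfl fun g _ => ?_
          rw [hYS g, hA]
      _ = (K : ℝ) * (V * W ^ (K - 1)) := by
          rw [chebyshev_sum a Y hY0 K, hV, hW]
  have hWK : W ^ K = W ^ (K - 1) * W := by
    rw [← pow_succ]
    congr 1
  have hB4 : B ≤ W ^ K / 4 := by
    have hV4 : 4 * V ≤ (K : ℝ) * (W * ε' ^ 2) := by
      rw [div_lt_iff₀ (by positivity)] at hKa
      linarith
    have hw1 : (0 : ℝ) ≤ W ^ (K - 1) := pow_nonneg hWpos.le _
    have e1 : (K : ℝ) * (V * W ^ (K - 1)) ≤ ((K : ℝ) * ε') ^ 2 * (W ^ K / 4) := by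
      have : V * W ^ (K - 1) ≤ ((K : ℝ) * (W * ε' ^ 2) / 4) * W ^ (K - 1) :=
        mul_le_mul_of_nonneg_right (by linarith) hw1
      calc (K : ℝ) * (V * W ^ (K - 1))
          ≤ (K : ℝ) * (((K : ℝ) * (W * ε' ^ 2) / 4) * W ^ (K - 1)) :=
            mul_le_mul_of_nonneg_left this hKpos.le
        _ = ((K : ℝ) * ε') ^ 2 * (W ^ K / 4) := by rw [hWK]; ring
    have := hcheb.trans e1
    have hc2 : (0 : ℝ) < ((K : ℝ) * ε') ^ 2 := by positivity
    exact (mul_le_mul_iff_right₀ hc2).mp this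
  -- the pruned tensor graph
  set G' : SimpleGraph (Fin K → U) :=
    { Adj := fun x y => (∀ i, G.Adj (x i) (y i)) ∧
        S (fun i => (x i, y i)) ≤ β ∧ S (fun i => (y i, x i)) ≤ β
      symm := by
        constructor; intro x y hxy
        exact ⟨fun i => (hxy.1 i).symm, hxy.2.2, hxy.2.1⟩
      loopless := ⟨fun x hx => G.loopless.irrefl _ (hx.1 0)⟩ } with hG'
  have hG'adj : ∀ x y : Fin K → U, G'.Adj x y ↔ ((∀ i, G.Adj (x i) (y i)) ∧
      S (fun i => (x i, y i)) ≤ β ∧ S (fun i => (y i, x i)) ≤ β) := fun x y => Iff.rfl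
  -- lower bound on number of edges of G'
  have hpt2 : ∀ x y : Fin K → U,
      A (fun i => (x i, y i)) - A (fun i => (x i, y i)) * bad (fun i => (x i, y i))
        - A (fun i => (y i, x i)) * bad (fun i => (y i, x i)) ≤ adjInd G' x y := by
    intro x y
    have hindnn : (0:ℝ) ≤ adjInd G' x y := adjInd_nonneg G' x y
    by_cases hadj : ∀ i, G.Adj (x i) (y i)
    · have hA1 : A (fun i => (x i, y i)) = 1 := by
        rw [hA]
        exact Finset.prod_eq_one fun i _ => if_pos (hadj i)
      have hA2 : A (fun i => (y i, x i)) = 1 := by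
        rw [hA]
        exact Finset.prod_eq_one fun i _ => if_pos (hadj i).symm
      by_cases h1 : S (fun i => (x i, y i)) ≤ β
      · by_cases h2 : S (fun i => (y i, x i)) ≤ β
        · have : adjInd G' x y = 1 := if_pos ((hG'adj x y).mpr ⟨hadj, h1, h2⟩)
          rw [this, hA1, hA2]
          have b1 := hbadnn (fun i => (x i, y i))
          have b2 := hbadnn (fun i => (y i, x i))
          linarith
        · have hb2 : bad (fun i => (y i, x i)) = 1 := by
            rw [hbad]; dsimp only; rw [if_pos (not_le.mp h2)]
          rw [hA1, hA2, hb2]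
          have b1 := hbadnn (fun i => (x i, y i))
          linarith
      · have hb1 : bad (fun i => (x i, y i)) = 1 := by
          rw [hbad]; dsimp only; rw [if_pos (not_le.mp h1)]
        rw [hA1, hb1]
        have b2 := hbadnn (fun i => (y i, x i))
        have hA2nn := hAnn (fun i => (y i, x i))
        have hb2nn := hbadnn (fun i => (y i, x i))
        have hmul := mul_nonneg hA2nn hb2nn
        linarith
    · push_neg at hadj
      obtain ⟨i0, hi0⟩ := hadj
      have hA1 : A (fun i => (x i, y i)) = 0 := by
        rw [hA]
        exact Finset.prod_eq_zero (Finset.mem_univ i0) (if_neg hi0)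
      have hA2 : A (fun i => (y i, x i)) = 0 := by
        rw [hA]
        exact Finset.prod_eq_zero (Finset.mem_univ i0) (if_neg fun h => hi0 h.symm)
      rw [hA1, hA2]
      linarith
  have hedge : W ^ K - 2 * B ≤ ∑ x : Fin K → U, ∑ y : Fin K → U, adjInd G' x y := by
    have hstep := Finset.sum_le_sum (f := fun x : Fin K → U => ∑ y : Fin K → U,
        (A (fun i => (x i, y i)) - A (fun i => (x i, y i)) * bad (fun i => (x i, y i))
          - A (fun i => (y i, x i)) * bad (fun i => (y i, x i))))
      (g := fun x : Fin K → U => ∑ y : Fin K → U, adjInd G' x y)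
      (fun x (_ : x ∈ Finset.univ) => Finset.sum_le_sum fun y _ => hpt2 x y)
    have hexp : ∑ x : Fin K → U, ∑ y : Fin K → U,
        (A (fun i => (x i, y i)) - A (fun i => (x i, y i)) * bad (fun i => (x i, y i))
          - A (fun i => (y i, x i)) * bad (fun i => (y i, x i))) = W ^ K - 2 * B := by
      simp only [Finset.sum_sub_distrib]
      rw [sum_pair_fun A, hsumA,
        sum_pair_fun (fun g => A g * bad g), ← hB]
      have h3 : ∑ x : Fin K → U, ∑ y : Fin K → U,
          A (fun i => (y i, x i)) * bad (fun i => (y i, x i)) = B := by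
        rw [Finset.sum_comm]
        rw [sum_pair_fun (fun g => A g * bad g), ← hB]
      rw [h3]
      ring
    linarith [hexp ▸ hstep]
  have hedge2 : W ^ K / 2 ≤ ∑ x : Fin K → U, ∑ y : Fin K → U, adjInd G' x y := by
    have := hB4
    linarith
  -- density of G'
  set d' : ℝ := graphDensity G' with hd'
  have hNk : (Fintype.card (Fin K → U) : ℝ) = (n : ℝ) ^ K := by
    rw [Fintype.card_fun, Fintype.card_fin, hn]
    push_cast
    rfl
  have hd'low : d ^ K / 2 ≤ d' := by
    rw [hd']
    unfold graphDensity
    rw [hNk]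
    have hconst : (0:ℝ) ≤ (((n : ℝ) ^ K) ^ 2)⁻¹ := by positivity
    have step := mul_le_mul_of_nonneg_left hedge2 hconst
    refine le_trans (le_of_eq ?_) step
    rw [hWeq]
    field_simp
    ring
  have hd'pos : 0 < d' := lt_of_lt_of_le (by positivity) hd'low
  -- upper bound on homDensity G' H
  have hhomup : homDensity G' H ≤ d' * Real.exp β := by
    rw [key_identity G' H v₁ v₂ he]
    have hptw : ∀ q : (Fin K → U) × (Fin K → U),
        adjInd G' q.1 q.2 * edgeRootedDensity G' (H.deleteEdges {s(v₁, v₂)}) v₁ v₂ q.1 q.2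
          ≤ adjInd G' q.1 q.2 * Real.exp β := by
      rintro ⟨x, y⟩
      by_cases hadj' : G'.Adj x y
      all_goals try skip
      · refine mul_le_mul_of_nonneg_left ?_ (adjInd_nonneg G' x y)
        have mono : edgeRootedDensity G' (H.deleteEdges {s(v₁, v₂)}) v₁ v₂ x y
            ≤ edgeRootedDensity (tensorG G k0) (H.deleteEdges {s(v₁, v₂)}) v₁ v₂ x y :=
          erd_mono (fun u w h => ((hG'adj u w).mp h).1) _ v₁ v₂ x y
        refine mono.trans ?_
        rw [erd_tensor G k0 (H.deleteEdges {s(v₁, v₂)}) v₁ v₂ x y]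
        have hprod : ∏ i : Fin K, edgeRootedDensity G (H.deleteEdges {s(v₁, v₂)}) v₁ v₂ (x i) (y i)
            = Real.exp (S fun i => (x i, y i)) := by
          rw [hS]
          dsimp only
          rw [Real.exp_sum]
          refine Finset.prod_congr rfl fun i _ => ?_
          rw [← ht1 (x i, y i) (((hG'adj x y).mp hadj').1 i)]
        rw [hprod]
        exact Real.exp_le_exp.mpr ((hG'adj x y).mp hadj').2.1
      · have : adjInd G' x y = 0 := if_neg hadj'
        rw [this, zero_mul, zero_mul]
    calc ((Fintype.card (Fin K → U) : ℝ) ^ 2)⁻¹ *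
        ∑ q : (Fin K → U) × (Fin K → U), adjInd G' q.1 q.2 *
          edgeRootedDensity G' (H.deleteEdges {s(v₁, v₂)}) v₁ v₂ q.1 q.2
        ≤ ((Fintype.card (Fin K → U) : ℝ) ^ 2)⁻¹ *
          ∑ q : (Fin K → U) × (Fin K → U), adjInd G' q.1 q.2 * Real.exp β := by
          refine mul_le_mul_of_nonneg_left (Finset.sum_le_sum fun q _ => hptw q) ?_
          positivity
      _ = d' * Real.exp β := by
          rw [← Finset.sum_mul, hd']
          unfold graphDensity
          rw [Fintype.sum_prod_type]
          ring
  -- Sidorenko and conclusion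
  have hsid := hSid (Fin K → U) G'
  rw [← hd'] at hsid
  have hEsplit : d' ^ E = d' ^ (E - 1) * d' := by
    rw [← pow_succ]
    congr 1
    omega
  have hkey : d' ^ (E - 1) ≤ Real.exp β := by
    have h1 : d' ^ (E - 1) * d' ≤ Real.exp β * d' := by
      rw [← hEsplit]
      calc d' ^ E ≤ homDensity G' H := hsid
        _ ≤ d' * Real.exp β := hhomup
        _ = Real.exp β * d' := by ring
    exact le_of_mul_le_mul_right h1 hd'pos
  have hlogkey : ((E : ℝ) - 1) * Real.log d' ≤ β := by
    have h2 := Real.log_le_log (pow_pos hd'pos (E - 1)) hkey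
    rw [Real.log_pow, Real.log_exp] at h2
    have hcast : ((E - 1 : ℕ) : ℝ) = (E : ℝ) - 1 := by
      push_cast [Nat.cast_sub hE1]
      ring
    rw [hcast] at h2
    exact h2
  have hlogd' : (K : ℝ) * Real.log d - Real.log 2 ≤ Real.log d' := by
    have h3 := Real.log_le_log (show (0:ℝ) < d ^ K / 2 by positivity) hd'low
    rw [Real.log_div (ne_of_gt (pow_pos hd K)) (by norm_num), Real.log_pow] at h3
    calc (K : ℝ) * Real.log d - Real.log 2
        = ((K : ℕ) : ℝ) * Real.log d - Real.log 2 := by norm_num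
      _ ≤ Real.log d' := h3
  have hEnn : (0 : ℝ) ≤ (E : ℝ) - 1 := by
    have : (1 : ℝ) ≤ (E : ℝ) := by exact_mod_cast hE1
    linarith
  have hmain : ((E : ℝ) - 1) * ((K : ℝ) * Real.log d - Real.log 2) ≤ β :=
    le_trans (mul_le_mul_of_nonneg_left hlogd' hEnn) hlogkey
  have hlog2 : ((E : ℝ) - 1) * Real.log 2 ≤ (K : ℝ) * ε' := by
    rw [div_lt_iff₀ hε'pos] at hKb
    linarith
  -- final arithmetic
  have hfin : (K : ℝ) * (((E : ℝ) - 1) * Real.log d) ≤ (K : ℝ) * (L + ε' + ε') := by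
    rw [hβ] at hmain
    linarith
  have := le_of_mul_le_mul_left hfin hKpos
  calc ((E : ℝ) - 1) * Real.log d ≤ L + ε' + ε' := this
    _ = L + ε := by rw [hε']; ring
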